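/- Let f = e^ψ be a symmetric, strictly log-convex, C^1 density on ℝ, and for x > 0 set V(x) = ∫₀ˣ f. Then liminf_{x→∞} V(x)·ψ'(x)/f(x) ≥ 1. -/

import Mathlib

open Filter

/-- Fundamental Bounding Lemma, lower bound: for `f = e^ψ` symmetric, strictly
log-convex and `C¹`, with `V x = ∫₀ˣ f`, we have `liminf_{x→∞} V(x) ψ'(x) / f(x) ≥ 1`. -/
theorem fundamental_bounding_liminf (ψ : ℝ → ℝ) (hψ : ContDiff ℝ 1 ψ)
    (hψ_even : ∀ y, ψ (-y) = ψ y) (hψ_strict_convex : StrictConvexOn ℝ Set.univ ψ)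
    (f : ℝ → ℝ) (hf : ∀ y, f y = Real.exp (ψ y))
    (V : ℝ → ℝ) (hV : ∀ x, V x = ∫ t in (0:ℝ)..x, f t) :
    1 ≤ Filter.liminf (fun x => V x * deriv ψ x / f x) Filter.atTop := by
  have hffun : f = fun y => Real.exp (ψ y) := funext hf
  have hVfun : V = fun x => ∫ t in (0:ℝ)..x, f t := funext hV
  subst hffun hVfun
  set f : ℝ → ℝ := fun y => Real.exp (ψ y) with hfdef
  set V : ℝ → ℝ := fun x => ∫ t in (0:ℝ)..x, f t with hVdef
  have hdψ : Differentiable ℝ ψ := hψ.differentiable one_ne_zero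
  have hcψ' : Continuous (deriv ψ) := hψ.continuous_deriv le_rfl
  have hf_pos : ∀ x, 0 < f x := fun x => Real.exp_pos _
  have hf_cont : Continuous f := Real.continuous_exp.comp hdψ.continuous
  have hfderiv : ∀ x, HasDerivAt f (f x * deriv ψ x) x := fun x =>
    ((hdψ x).hasDerivAt).exp
  have hVderiv : ∀ x, HasDerivAt V (f x) x := fun x =>
    (hf_cont.integral_hasStrictDerivAt 0 x).hasDerivAt
  -- deriv ψ is strictly monotone
  have hmono : StrictMono (deriv ψ) := by
    have := hψ_strict_convex.strictMonoOn_deriv (fun x _ => hdψ x)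
    exact fun a b hab => this (Set.mem_univ a) (Set.mem_univ b) hab
  -- deriv ψ is odd, hence deriv ψ 0 = 0
  have hodd : ∀ x, deriv ψ x = -deriv ψ (-x) := by
    intro x
    have h1 : deriv (fun y => ψ (-y)) x = -deriv ψ (-x) := deriv_comp_neg ψ x
    have h2 : (fun y => ψ (-y)) = ψ := funext hψ_even
    rw [h2] at h1; exact h1
  have hψ'0 : deriv ψ 0 = 0 := by
    have := hodd 0; rw [neg_zero] at this; linarith
  have hψ'pos : ∀ x > 0, 0 < deriv ψ x := fun x hx => hψ'0 ▸ hmono hx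
  -- the key integral identity
  have hFTC : ∀ x, (∫ t in (0:ℝ)..x, f t * deriv ψ t) = f x - f 0 := by
    intro x
    exact intervalIntegral.integral_eq_sub_of_hasDerivAt
      (fun t _ => hfderiv t) ((hf_cont.mul hcψ').intervalIntegrable 0 x)
  -- the main lower bound
  have hV_lb : ∀ x, 0 ≤ x → f x - f 0 ≤ V x * deriv ψ x := by
    intro x hx
    have h1 : V x * deriv ψ x = ∫ t in (0:ℝ)..x, f t * deriv ψ x := by
      rw [hVdef]; simp [intervalIntegral.integral_mul_const]
    rw [h1, ← hFTC x]
    apply intervalIntegral.integral_mono_on hx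
      ((hf_cont.mul hcψ').intervalIntegrable 0 x)
      ((hf_cont.mul continuous_const).intervalIntegrable 0 x)
    intro t ht
    exact mul_le_mul_of_nonneg_left (hmono.monotone ht.2) (hf_pos t).le
  -- f tends to infinity
  have hψ_top : Tendsto ψ atTop atTop := by
    have hlin : Tendsto (fun x => ψ 1 + deriv ψ 1 * (x - 1)) atTop atTop := by
      apply tendsto_atTop_add_const_left
      exact (tendsto_atTop_add_const_right _ _ tendsto_id).const_mul_atTop (hψ'pos 1 one_pos)
    apply tendsto_atTop_mono' _ _ hlin
    filter_upwards [eventually_gt_atTop 1] with x hx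
    obtain ⟨c, hc, hceq⟩ := exists_deriv_eq_slope ψ hx hdψ.continuous.continuousOn
      hdψ.differentiableOn
    have h1 : deriv ψ 1 ≤ deriv ψ c := (hmono hc.1).le
    have h2 : deriv ψ c * (x - 1) = ψ x - ψ 1 := by
      have hx1 : x - 1 ≠ 0 := sub_ne_zero.mpr hx.ne'
      rw [hceq]; field_simp
    nlinarith [h1, sub_pos.mpr hx]
  have hf_top : Tendsto f atTop atTop := Real.tendsto_exp_atTop.comp hψ_top
  -- the comparison function tends to 1
  have hu_tendsto : Tendsto (fun x => (f x - f 0) / f x) atTop (nhds 1) := by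
    have h1 : Tendsto (fun x => f 0 / f x) atTop (nhds 0) := hf_top.const_div_atTop _
    have h2 : ∀ᶠ x in atTop, (f x - f 0) / f x = 1 - f 0 / f x := by
      filter_upwards with x
      rw [sub_div, div_self (hf_pos x).ne']
    rw [tendsto_congr' h2]
    simpa using tendsto_const_nhds.sub h1
  -- eventual comparison
  have hev : ∀ᶠ x in atTop, (f x - f 0) / f x ≤ V x * deriv ψ x / f x := by
    filter_upwards [eventually_ge_atTop (0:ℝ)] with x hx
    exact (div_le_div_iff_of_pos_right (hf_pos x)).mpr (hV_lb x hx)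
  -- coboundedness of the target function
  have hcobdd : IsCoboundedUnder (· ≥ ·) atTop (fun x => V x * deriv ψ x / f x) := by
    refine ⟨1, fun a ha => ?_⟩
    by_contra hcon
    push_neg at hcon
    -- a > 1, and eventually V x * ψ' x / f x ≥ a
    obtain ⟨N, hN⟩ := (eventually_atTop).mp ha
    set M := max N 1 with hM
    -- w = V / f  satisfies w' = 1 - w ψ' ≤ 1 - a on [M, ∞)
    set w : ℝ → ℝ := fun x => V x / f x with hw
    have hwderiv : ∀ x, HasDerivAt w (1 - w x * deriv ψ x) x := by
      intro x
      have := (hVderiv x).div (hfderiv x) (hf_pos x).ne'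
      refine this.congr_deriv ?_
      have hfx : f x ≠ 0 := (hf_pos x).ne'
      rw [hw]
      field_simp
    set g : ℝ → ℝ := fun x => w x - (1 - a) * x with hg
    have hgderiv : ∀ x, HasDerivAt g (1 - w x * deriv ψ x - (1 - a)) x := by
      intro x
      have := (hwderiv x).sub (HasDerivAt.const_mul (1 - a) (hasDerivAt_id x))
      exact this.congr_deriv (by ring)
    have hanti : AntitoneOn g (Set.Ici M) := by
      apply antitoneOn_of_deriv_nonpos (convex_Ici M)
      · exact fun x _ => ((hgderiv x).continuousAt).continuousWithinAt
      · exact fun x _ => ((hgderiv x).differentiableAt).differentiableWithinAt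
      · intro x hx
        rw [interior_Ici] at hx
        have hxM : M < x := hx
        have hxN : N ≤ x := le_trans (le_max_left N 1) hxM.le
        have hx1 : (1:ℝ) < x := lt_of_le_of_lt (le_max_right N 1) hxM
        have hva : a ≤ V x * deriv ψ x / f x := hN x hxN
        have hwψ : a ≤ w x * deriv ψ x := by
          rw [hw]
          calc a ≤ V x * deriv ψ x / f x := hva
            _ = V x / f x * deriv ψ x := by ring
        rw [(hgderiv x).deriv]
        linarith
    -- derive a contradiction: g decreases linearly, but w ≥ 0
    have hwnonneg : ∀ x, 0 ≤ x → 0 ≤ w x := by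
      intro x hx
      apply div_nonneg _ (hf_pos x).le
      rw [hVdef]
      exact intervalIntegral.integral_nonneg hx (fun t _ => (hf_pos t).le)
    have ha1 : (1:ℝ) < a := hcon
    set x₀ : ℝ := M + (w M + 1) / (a - 1) with hx₀
    have hMpos : (0:ℝ) < M := lt_of_lt_of_le one_pos (le_max_right N 1)
    have hwM : 0 ≤ w M := hwnonneg M hMpos.le
    have hfrac : 0 < (w M + 1) / (a - 1) := div_pos (by linarith) (by linarith)
    have hx₀M : M ≤ x₀ := by rw [hx₀]; linarith
    have := hanti (Set.self_mem_Ici) hx₀M hx₀M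
    -- g x₀ ≤ g M  gives  w x₀ ≤ w M + (1-a)(x₀ - M) = -1
    rw [hg] at this
    simp only at this
    have hkey : w x₀ ≤ w M + (1 - a) * (x₀ - M) := by linarith
    have hane : a - 1 ≠ 0 := by linarith
    have hxM' : x₀ - M = (w M + 1) / (a - 1) := by rw [hx₀]; ring
    have hxval : (1 - a) * (x₀ - M) = -(w M + 1) := by
      rw [hxM']
      calc (1 - a) * ((w M + 1) / (a - 1)) = -((w M + 1) / (a - 1) * (a - 1)) := by ring
        _ = -(w M + 1) := by rw [div_mul_cancel₀ _ hane]
    rw [hxval] at hkey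
    have : 0 ≤ w x₀ := hwnonneg x₀ (le_trans hMpos.le hx₀M)
    linarith
  -- conclude
  have h1 : Filter.liminf (fun x => (f x - f 0) / f x) atTop = 1 :=
    hu_tendsto.liminf_eq
  calc (1:ℝ) = Filter.liminf (fun x => (f x - f 0) / f x) atTop := h1.symm
    _ ≤ Filter.liminf (fun x => V x * deriv ψ x / f x) atTop :=
        Filter.liminf_le_liminf hev hu_tendsto.isBoundedUnder_ge hcobdd
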